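/- (Covariant-derivative identities (7.18) and (7.19) in special coordinates) Assume the special-coordinate conditions of intermediate degeneration with M = 0: P = 0 on U, the expressions A and B satisfy A = 0 and B = 1 identically on U, and Q_{1.0} = (12/5)·Q² on U. Define Ω = R_{1.0} − 2·Q_{0.1} and Λ = −2·R_{1.0} + 3·Q_{0.1} + (6/5)·Q·R. Then on U one has Ω_{1.0} = 3·Q·Ω and Λ_{1.0} = (12/5)·Q·Λ (equivalently, the covariant derivatives of the weight-1 pseudoscalars Ω and Λ along x satisfy ∇₁Ω = (9/5)·Q·Ω and ∇₁Λ = (6/5)·Q·Λ with φ₁ = −(6/5)·Q). -/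

import Mathlib

noncomputable section

open Real

/-- Partial derivative in the first argument (`f_{1.0}`). -/
def pdx (f : ℝ → ℝ → ℝ) : ℝ → ℝ → ℝ := fun x y => deriv (fun t => f t y) x

/-- Partial derivative in the second argument (`f_{0.1}`). -/
def pdy (f : ℝ → ℝ → ℝ) : ℝ → ℝ → ℝ := fun x y => deriv (fun t => f x t) y

/-- Indexed partial derivative: `0 ↦ ∂/∂x`, `1 ↦ ∂/∂y`. -/
def pd (i : Fin 2) (f : ℝ → ℝ → ℝ) : ℝ → ℝ → ℝ := if i = 0 then pdx f else pdy f

/-- Smoothness of a two-variable real function on a set `U ⊆ ℝ²`. -/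
def Smooth2 (U : Set (ℝ × ℝ)) (f : ℝ → ℝ → ℝ) : Prop :=
  ContDiffOn ℝ (⊤ : ℕ∞) (Function.uncurry f) U

/-- The quantity `A` of formula (1.6). -/
def coefA (P Q R S : ℝ → ℝ → ℝ) : ℝ → ℝ → ℝ := fun x y =>
  pdy (pdy P) x y - 2 * pdx (pdy Q) x y + pdx (pdx R) x y
    + 2 * P x y * pdx S x y + S x y * pdx P x y
    - 3 * P x y * pdy R x y - 3 * R x y * pdy P x y
    - 3 * Q x y * pdx R x y + 6 * Q x y * pdy Q x y

/-- The quantity `B` of formula (1.6). -/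
def coefB (P Q R S : ℝ → ℝ → ℝ) : ℝ → ℝ → ℝ := fun x y =>
  pdx (pdx S) x y - 2 * pdx (pdy R) x y + pdy (pdy Q) x y
    - 2 * S x y * pdy P x y - P x y * pdy S x y
    + 3 * S x y * pdx Q x y + 3 * Q x y * pdx S x y
    + 3 * R x y * pdy Q x y - 6 * R x y * pdx R x y

namespace CovAux

open Function Filter Topology

variable {U : Set (ℝ × ℝ)} {f : ℝ → ℝ → ℝ}

lemma mem_nhds_x {x y : ℝ} (hU : IsOpen U) (h : (x, y) ∈ U) :
    ∀ᶠ t in 𝓝 x, (t, y) ∈ U := by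
  have hc : ContinuousAt (fun t : ℝ => (t, y)) x := by fun_prop
  exact hc (hU.mem_nhds h)

lemma mem_nhds_y {x y : ℝ} (hU : IsOpen U) (h : (x, y) ∈ U) :
    ∀ᶠ s in 𝓝 y, (x, s) ∈ U := by
  have hc : ContinuousAt (fun s : ℝ => (x, s)) y := by fun_prop
  exact hc (hU.mem_nhds h)

lemma lineX_hasDerivAt (x y : ℝ) :
    HasDerivAt (fun t : ℝ => (t, y)) ((1 : ℝ), (0 : ℝ)) x :=
  (hasDerivAt_id x).prodMk (hasDerivAt_const x y)

lemma lineY_hasDerivAt (x y : ℝ) :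
    HasDerivAt (fun s : ℝ => (x, s)) ((0 : ℝ), (1 : ℝ)) y :=
  (hasDerivAt_const y x).prodMk (hasDerivAt_id y)

lemma diffAt (hU : IsOpen U) (hf : Smooth2 U f) {x y : ℝ} (h : (x, y) ∈ U) :
    DifferentiableAt ℝ (uncurry f) (x, y) :=
  (hf.contDiffAt (hU.mem_nhds h)).differentiableAt (by simp)

lemma hasDerivAt_fderiv_x (hU : IsOpen U) (hf : Smooth2 U f) {x y : ℝ} (h : (x, y) ∈ U) :
    HasDerivAt (fun t => f t y) (fderiv ℝ (uncurry f) (x, y) (1, 0)) x :=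
  HasFDerivAt.comp_hasDerivAt (f := fun t : ℝ => (t, y)) x (diffAt hU hf h).hasFDerivAt (lineX_hasDerivAt x y)

lemma hasDerivAt_fderiv_y (hU : IsOpen U) (hf : Smooth2 U f) {x y : ℝ} (h : (x, y) ∈ U) :
    HasDerivAt (fun s => f x s) (fderiv ℝ (uncurry f) (x, y) (0, 1)) y :=
  HasFDerivAt.comp_hasDerivAt (f := fun s : ℝ => (x, s)) y (diffAt hU hf h).hasFDerivAt (lineY_hasDerivAt x y)

lemma pdx_eq_fderiv (hU : IsOpen U) (hf : Smooth2 U f) {x y : ℝ} (h : (x, y) ∈ U) :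
    pdx f x y = fderiv ℝ (uncurry f) (x, y) (1, 0) :=
  (hasDerivAt_fderiv_x hU hf h).deriv

lemma pdy_eq_fderiv (hU : IsOpen U) (hf : Smooth2 U f) {x y : ℝ} (h : (x, y) ∈ U) :
    pdy f x y = fderiv ℝ (uncurry f) (x, y) (0, 1) :=
  (hasDerivAt_fderiv_y hU hf h).deriv

lemma hasDerivAt_x (hU : IsOpen U) (hf : Smooth2 U f) {x y : ℝ} (h : (x, y) ∈ U) :
    HasDerivAt (fun t => f t y) (pdx f x y) x := by
  rw [pdx_eq_fderiv hU hf h]; exact hasDerivAt_fderiv_x hU hf h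

lemma hasDerivAt_y (hU : IsOpen U) (hf : Smooth2 U f) {x y : ℝ} (h : (x, y) ∈ U) :
    HasDerivAt (fun s => f x s) (pdy f x y) y := by
  rw [pdy_eq_fderiv hU hf h]; exact hasDerivAt_fderiv_y hU hf h

lemma smooth2_fderiv (hU : IsOpen U) (hf : Smooth2 U f) :
    ContDiffOn ℝ (⊤ : ℕ∞) (fderiv ℝ (uncurry f)) U :=
  ((contDiffOn_infty_iff_fderiv_of_isOpen hU).1 hf).2

lemma smooth2_pdx (hU : IsOpen U) (hf : Smooth2 U f) : Smooth2 U (pdx f) := by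
  have h2 : ContDiffOn ℝ (⊤ : ℕ∞)
      (fun p : ℝ × ℝ => fderiv ℝ (uncurry f) p (1, 0)) U :=
    (smooth2_fderiv hU hf).clm_apply contDiffOn_const
  exact h2.congr fun p hp => by
    obtain ⟨a, b⟩ := p
    exact pdx_eq_fderiv hU hf hp

lemma smooth2_pdy (hU : IsOpen U) (hf : Smooth2 U f) : Smooth2 U (pdy f) := by
  have h2 : ContDiffOn ℝ (⊤ : ℕ∞)
      (fun p : ℝ × ℝ => fderiv ℝ (uncurry f) p (0, 1)) U :=
    (smooth2_fderiv hU hf).clm_apply contDiffOn_const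
  exact h2.congr fun p hp => by
    obtain ⟨a, b⟩ := p
    exact pdy_eq_fderiv hU hf hp

/-- Clairaut's theorem for `pdx`/`pdy` on an open set. -/
lemma pdx_pdy_symm (hU : IsOpen U) (hf : Smooth2 U f) {x y : ℝ} (h : (x, y) ∈ U) :
    pdx (pdy f) x y = pdy (pdx f) x y := by
  set F := uncurry f with hF
  have hx : ContDiffAt ℝ (⊤ : ℕ∞) F (x, y) := hf.contDiffAt (hU.mem_nhds h)
  have hsymm : IsSymmSndFDerivAt ℝ F (x, y) :=
    hx.isSymmSndFDerivAt (by rw [minSmoothness_of_isRCLikeNormedField]; exact WithTop.coe_le_coe.mpr le_top)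
  have hF'd : DifferentiableAt ℝ (fderiv ℝ F) (x, y) :=
    (((smooth2_fderiv hU hf).contDiffAt (hU.mem_nhds h)).differentiableAt (by simp))
  -- first mixed partial
  have d1 : pdx (pdy f) x y = fderiv ℝ (fderiv ℝ F) (x, y) (1, 0) (0, 1) := by
    have e1 : (fun t => pdy f t y) =ᶠ[𝓝 x]
        fun t => fderiv ℝ F (t, y) ((0 : ℝ), (1 : ℝ)) := by
      filter_upwards [mem_nhds_x hU h] with t ht
      exact pdy_eq_fderiv hU hf ht
    have hD : HasDerivAt (fun t => fderiv ℝ F (t, y) ((0 : ℝ), (1 : ℝ)))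
        (((fderiv ℝ F (x, y)).comp (0 : (ℝ × ℝ) →L[ℝ] (ℝ × ℝ))
          + (fderiv ℝ (fderiv ℝ F) (x, y)).flip ((0 : ℝ), (1 : ℝ))) (1, 0)) x :=
      (hF'd.hasFDerivAt.clm_apply
        (hasFDerivAt_const ((0 : ℝ), (1 : ℝ)) ((x, y) : ℝ × ℝ))).comp_hasDerivAt
          (f := fun t : ℝ => (t, y)) x (lineX_hasDerivAt x y)
    have : pdx (pdy f) x y = deriv (fun t => fderiv ℝ F (t, y) ((0:ℝ),(1:ℝ))) x :=
      e1.deriv_eq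
    rw [this, hD.deriv]
    simp
  -- second mixed partial
  have d2 : pdy (pdx f) x y = fderiv ℝ (fderiv ℝ F) (x, y) (0, 1) (1, 0) := by
    have e2 : (fun s => pdx f x s) =ᶠ[𝓝 y]
        fun s => fderiv ℝ F (x, s) ((1 : ℝ), (0 : ℝ)) := by
      filter_upwards [mem_nhds_y hU h] with s hs
      exact pdx_eq_fderiv hU hf hs
    have hD : HasDerivAt (fun s => fderiv ℝ F (x, s) ((1 : ℝ), (0 : ℝ)))
        (((fderiv ℝ F (x, y)).comp (0 : (ℝ × ℝ) →L[ℝ] (ℝ × ℝ))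
          + (fderiv ℝ (fderiv ℝ F) (x, y)).flip ((1 : ℝ), (0 : ℝ))) (0, 1)) y :=
      (hF'd.hasFDerivAt.clm_apply
        (hasFDerivAt_const ((1 : ℝ), (0 : ℝ)) ((x, y) : ℝ × ℝ))).comp_hasDerivAt
          (f := fun s : ℝ => (x, s)) y (lineY_hasDerivAt x y)
    have : pdy (pdx f) x y = deriv (fun s => fderiv ℝ F (x, s) ((1:ℝ),(0:ℝ))) y :=
      e2.deriv_eq
    rw [this, hD.deriv]
    simp
  rw [d1, d2, hsymm (1, 0) (0, 1)]

end CovAux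

open Filter Topology

/-- Covariant-derivative identities (7.18) and (7.19) in special coordinates:
`Ω_{1.0} = 3·Q·Ω` and `Λ_{1.0} = (12/5)·Q·Λ` (equivalently `∇₁Ω = (9/5)·Q·Ω`
and `∇₁Λ = (6/5)·Q·Λ` with `φ₁ = −(6/5)·Q`). -/
theorem covariant_derivative_identities
    (U : Set (ℝ × ℝ)) (hU : IsOpen U) (hUconn : IsConnected U)
    (P Q R S : ℝ → ℝ → ℝ)
    (hP : Smooth2 U P) (hQ : Smooth2 U Q) (hR : Smooth2 U R) (hS : Smooth2 U S)
    (hPzero : ∀ x y : ℝ, (x, y) ∈ U → P x y = 0)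
    (hA : ∀ x y : ℝ, (x, y) ∈ U → coefA P Q R S x y = 0)
    (hB : ∀ x y : ℝ, (x, y) ∈ U → coefB P Q R S x y = 1)
    (hM : ∀ x y : ℝ, (x, y) ∈ U → pdx Q x y = (12/5) * (Q x y)^2) :
    ∀ x y : ℝ, (x, y) ∈ U →
      pdx (fun x y => pdx R x y - 2 * pdy Q x y) x y
        = 3 * Q x y * (pdx R x y - 2 * pdy Q x y) ∧
      pdx (fun x y => -2 * pdx R x y + 3 * pdy Q x y + (6/5) * Q x y * R x y) x y
        = (12/5) * Q x y *
          (-2 * pdx R x y + 3 * pdy Q x y + (6/5) * Q x y * R x y) := by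
  -- derivatives of P vanish on U
  have hPx0 : ∀ a b : ℝ, (a, b) ∈ U → pdx P a b = 0 := by
    intro a b hab
    have e : (fun t => P t b) =ᶠ[𝓝 a] fun _ => (0 : ℝ) := by
      filter_upwards [CovAux.mem_nhds_x hU hab] with t ht using hPzero t b ht
    show deriv (fun t => P t b) a = 0
    rw [e.deriv_eq]; simp
  have hPy0 : ∀ a b : ℝ, (a, b) ∈ U → pdy P a b = 0 := by
    intro a b hab
    have e : (fun s => P a s) =ᶠ[𝓝 b] fun _ => (0 : ℝ) := by
      filter_upwards [CovAux.mem_nhds_y hU hab] with s hs using hPzero a s hs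
    show deriv (fun s => P a s) b = 0
    rw [e.deriv_eq]; simp
  have hPyy0 : ∀ a b : ℝ, (a, b) ∈ U → pdy (pdy P) a b = 0 := by
    intro a b hab
    have e : (fun s => pdy P a s) =ᶠ[𝓝 b] fun _ => (0 : ℝ) := by
      filter_upwards [CovAux.mem_nhds_y hU hab] with s hs using hPy0 a s hs
    show deriv (fun s => pdy P a s) b = 0
    rw [e.deriv_eq]; simp
  intro x y h
  -- the reduced A-equation
  have hc : -2 * pdx (pdy Q) x y + pdx (pdx R) x y
      - 3 * Q x y * pdx R x y + 6 * Q x y * pdy Q x y = 0 := by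
    have := hA x y h
    simp only [coefA] at this
    rw [hPyy0 x y h, hPx0 x y h, hPy0 x y h, hPzero x y h] at this
    linarith
  -- mixed partials of Q are symmetric
  have hsymmQ : pdx (pdy Q) x y = pdy (pdx Q) x y := CovAux.pdx_pdy_symm hU hQ h
  -- differentiate hM in y
  have hQxy : pdy (pdx Q) x y = (24/5) * Q x y * pdy Q x y := by
    have e : (fun s => pdx Q x s) =ᶠ[𝓝 y] fun s => (12/5) * (Q x s)^2 := by
      filter_upwards [CovAux.mem_nhds_y hU h] with s hs using hM x s hs
    have hd : HasDerivAt (fun s => (12/5) * (Q x s)^2)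
        ((12/5) * ((2 : ℕ) * (Q x y) ^ 1 * pdy Q x y)) y :=
      ((CovAux.hasDerivAt_y hU hQ h).pow 2).const_mul (12/5)
    have : pdy (pdx Q) x y = deriv (fun s => (12/5) * (Q x s)^2) y := e.deriv_eq
    rw [this, hd.deriv]; ring
  have hqyx : pdx (pdy Q) x y = (24/5) * Q x y * pdy Q x y := hsymmQ.trans hQxy
  -- derivative facts for the slices
  have h1 : HasDerivAt (fun t => pdx R t y) (pdx (pdx R) x y) x :=
    CovAux.hasDerivAt_x hU (CovAux.smooth2_pdx hU hR) h
  have h2 : HasDerivAt (fun t => pdy Q t y) (pdx (pdy Q) x y) x :=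
    CovAux.hasDerivAt_x hU (CovAux.smooth2_pdy hU hQ) h
  have hQ1 : HasDerivAt (fun t => Q t y) (pdx Q x y) x := CovAux.hasDerivAt_x hU hQ h
  have hR1 : HasDerivAt (fun t => R t y) (pdx R x y) x := CovAux.hasDerivAt_x hU hR h
  constructor
  · -- first identity
    have hg : HasDerivAt (fun t => pdx R t y - 2 * pdy Q t y)
        (pdx (pdx R) x y - 2 * pdx (pdy Q) x y) x := h1.sub (h2.const_mul 2)
    show deriv (fun t => pdx R t y - 2 * pdy Q t y) x = _
    rw [hg.deriv]
    linear_combination hc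
  · -- second identity
    have hg : HasDerivAt
        (fun t => -2 * pdx R t y + 3 * pdy Q t y + (6/5) * Q t y * R t y)
        (-2 * pdx (pdx R) x y + 3 * pdx (pdy Q) x y
          + (6/5 * pdx Q x y * R x y + 6/5 * Q x y * pdx R x y)) x := by
      have hm : HasDerivAt (fun t => 6/5 * Q t y * R t y)
          (6/5 * pdx Q x y * R x y + 6/5 * Q x y * pdx R x y) x :=
        (hQ1.const_mul (6/5)).mul hR1
      exact ((h1.const_mul (-2)).add (h2.const_mul 3)).add hm
    show deriv (fun t => -2 * pdx R t y + 3 * pdy Q t y + (6/5) * Q t y * R t y) x = _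
    rw [hg.deriv]
    linear_combination (-2 : ℝ) * hc - hqyx + (6/5) * (R x y) * (hM x y h)
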